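/- arXiv:0912.4854 — 4 statements merged into one kernel-verified Lean document; each statement's English description precedes it below -/
import Mathlib

section
/- Let e > 1 be an integer and let ℓ be an odd prime. Let ξ ∈ ℂ be a root of unity of odd order d > 1 such that ℓ ∤ d and gcd(e, ℓd) = 1. Then ∏_ω cyc(ωξ) = cyc(ξ^ℓ)/cyc(ξ), where the product runs over all primitive ℓ-th roots of unity ω ∈ ℂ. (This is the Euler-system norm relation N_{F_m(nℓ)/F_m(n)}(cyc(ζ_ℓ ξ)) = cyc(ξ^ℓ)/cyc(ξ) of Lemma 4.4(1), with the Galois conjugates of ζ_ℓ written out as the primitive ℓ-th roots of unity.) -/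
/-- For a root of unity `ζ` of odd order `d > 1` with `gcd e d = 1`, the cyclotomic unit
`cyc ζ = ζ^{((d+1)/2)(1-e)} (1-ζ^e)/(1-ζ) = (ζ^{-e/2}-ζ^{e/2})/(ζ^{-1/2}-ζ^{1/2})`. -/
noncomputable def cyc (e : ℕ) (ζ : ℂ) : ℂ :=
  ζ ^ ((((orderOf ζ : ℤ) + 1) / 2) * (1 - (e : ℤ))) * (1 - ζ ^ e) / (1 - ζ)

open Polynomial Finset

lemma prod_neg_primRoots {n : ℕ} (hn : 1 < n) :
    ∏ ω ∈ primitiveRoots n ℂ, (-ω) = 1 := by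
  have hn0 : n ≠ 0 := by omega
  have hprim := Complex.isPrimitiveRoot_exp n hn0
  have h1 := Polynomial.cyclotomic_coeff_zero ℂ hn
  rw [Polynomial.coeff_zero_eq_eval_zero,
    cyclotomic_eq_prod_X_sub_primitiveRoots hprim, eval_prod] at h1
  simpa using h1

lemma prod_one_sub_primRoots {n : ℕ} (hn : 1 < n) (y : ℂ) :
    ∏ ω ∈ primitiveRoots n ℂ, (1 - ω * y) = (Polynomial.cyclotomic n ℂ).eval y := by
  have hn0 : n ≠ 0 := by omega
  have hpos : 0 < n := by omega
  have hprim := Complex.isPrimitiveRoot_exp n hn0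
  rw [cyclotomic_eq_prod_X_sub_primitiveRoots hprim, eval_prod]
  simp only [eval_sub, eval_X, eval_C]
  have step1 : ∀ ω ∈ primitiveRoots n ℂ, (1 - ω * y) = (-ω) * (y - ω⁻¹) := by
    intro ω hω
    have hωp : IsPrimitiveRoot ω n := (mem_primitiveRoots hpos).1 hω
    have hω0 : ω ≠ 0 := hωp.ne_zero hn0
    field_simp
    ring
  rw [Finset.prod_congr rfl step1, Finset.prod_mul_distrib, prod_neg_primRoots hn, one_mul]
  refine Finset.prod_nbij' (fun ω => ω⁻¹) (fun ω => ω⁻¹) ?_ ?_ ?_ ?_ ?_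
  · intro ω hω
    exact (mem_primitiveRoots hpos).2 ((mem_primitiveRoots hpos).1 hω).inv
  · intro ω hω
    exact (mem_primitiveRoots hpos).2 ((mem_primitiveRoots hpos).1 hω).inv
  · intro ω _; exact inv_inv ω
  · intro ω _; exact inv_inv ω
  · intro ω _; rfl

/-- (Lemma 4.4(1), Euler-system norm relation.)  For `e > 1`, an odd prime
`ℓ`, and a root of unity `ξ` of odd order `d > 1` with `ℓ ∤ d` and `gcd (e, ℓd) = 1`, one has
`∏_ω cyc (ω ξ) = cyc (ξ^ℓ) / cyc ξ`, the product running over the primitive `ℓ`-th roots of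
unity `ω ∈ ℂ`. -/
theorem statement0 (e : ℕ) (he : 1 < e) (ℓ : ℕ) (hℓ : ℓ.Prime) (hℓodd : Odd ℓ)
    (ξ : ℂ) (d : ℕ) (hd1 : 1 < d) (hdodd : Odd d) (hord : orderOf ξ = d)
    (hℓd : ¬ ℓ ∣ d) (hcop : Nat.gcd e (ℓ * d) = 1) :
    ∏ ω ∈ primitiveRoots ℓ ℂ, cyc e (ω * ξ) = cyc e (ξ ^ ℓ) / cyc e ξ := by

  haveI : Fact ℓ.Prime := ⟨hℓ⟩
  obtain ⟨b, hb⟩ := hℓodd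
  obtain ⟨a, ha⟩ := hdodd
  have hℓ1 : 1 < ℓ := hℓ.one_lt
  have hℓ0 : ℓ ≠ 0 := by omega
  have hℓpos : 0 < ℓ := by omega
  have hd0 : d ≠ 0 := by omega
  -- coprimality facts
  have hcopeℓ : Nat.Coprime e ℓ := Nat.Coprime.coprime_dvd_right ⟨d, rfl⟩ hcop
  have hcoped : Nat.Coprime e d := Nat.Coprime.coprime_dvd_right ⟨ℓ, mul_comm ℓ d⟩ hcop
  have hcopℓd : Nat.Coprime ℓ d := (Nat.Prime.coprime_iff_not_dvd hℓ).2 hℓd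
  -- basic facts about ξ
  have hξd : ξ ^ d = 1 := by rw [← hord]; exact pow_orderOf_eq_one ξ
  have hξprim : IsPrimitiveRoot ξ d :=
    ⟨hξd, fun l hl => hord ▸ orderOf_dvd_of_pow_eq_one hl⟩
  have hξ0 : ξ ≠ 0 := hξprim.ne_zero hd0
  have hξ1 : ξ ≠ 1 := by
    intro h; rw [h, orderOf_one] at hord; omega
  have hξℓ : ξ ^ ℓ ≠ 1 := by
    intro h
    have h2 := orderOf_dvd_of_pow_eq_one h
    rw [hord] at h2
    rcases (Nat.Prime.eq_one_or_self_of_dvd hℓ d h2) with h3 | h3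
    · omega
    · exact hℓd (h3 ▸ dvd_refl d)
  have hξe : ξ ^ e ≠ 1 := by
    intro h
    have h2 := orderOf_dvd_of_pow_eq_one h
    rw [hord] at h2
    have : d ∣ Nat.gcd e (ℓ * d) := Nat.dvd_gcd h2 ⟨ℓ, mul_comm ℓ d⟩
    rw [hcop] at this
    have := Nat.dvd_one.mp this
    omega
  have hordℓ : orderOf (ξ ^ ℓ) = d :=
    ((hξprim.pow_of_coprime ℓ hcopℓd).eq_orderOf).symm
  set S := primitiveRoots ℓ ℂ with hS
  set c : ℤ := ((((ℓ * d : ℕ) : ℤ) + 1) / 2) * (1 - (e : ℤ)) with hc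
  set cd : ℤ := (((d : ℤ) + 1) / 2) * (1 - (e : ℤ)) with hcd
  -- rewrite each factor of the product
  have hstep : ∀ ω ∈ S, cyc e (ω * ξ) = (ω * ξ) ^ c * (1 - (ω * ξ) ^ e) / (1 - ω * ξ) := by
    intro ω hω
    have hωp : IsPrimitiveRoot ω ℓ := (mem_primitiveRoots hℓpos).1 hω
    have hωord : orderOf ω = ℓ := hωp.eq_orderOf.symm
    have : orderOf (ω * ξ) = ℓ * d := by
      rw [(Commute.all ω ξ).orderOf_mul_eq_mul_orderOf_of_coprime
        (by rw [hωord, hord]; exact hcopℓd), hωord, hord]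
    rw [cyc, this]
  rw [Finset.prod_congr rfl hstep, Finset.prod_div_distrib, Finset.prod_mul_distrib]
  -- auxiliary products
  have hcard : S.card = ℓ - 1 := by
    rw [hS, (Complex.isPrimitiveRoot_exp ℓ hℓ0).card_primitiveRoots, Nat.totient_prime hℓ]
  have hprodω : ∏ ω ∈ S, ω = 1 := by
    have h2 : ∏ ω ∈ S, ω = (-1 : ℂ) ^ S.card * ∏ ω ∈ S, (-ω) := by
      rw [← Finset.prod_const, ← Finset.prod_mul_distrib]
      exact Finset.prod_congr rfl fun ω _ => by ring
    rw [h2, prod_neg_primRoots hℓ1, mul_one, hcard]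
    have : Even (ℓ - 1) := ⟨b, by omega⟩
    exact this.neg_one_pow
  have h1 : ∏ ω ∈ S, (ω * ξ) ^ c = ξ ^ (((ℓ : ℤ) - 1) * c) := by
    rw [Finset.prod_zpow, Finset.prod_mul_distrib, hprodω, one_mul, Finset.prod_const,
      hcard, ← zpow_natCast ξ (ℓ - 1), ← zpow_mul]
    congr 1
    push_cast [Nat.cast_sub hℓ1.le]
    ring
  have h2 : ∏ ω ∈ S, (1 - ω * ξ) = (Polynomial.cyclotomic ℓ ℂ).eval ξ :=
    prod_one_sub_primRoots hℓ1 ξ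
  -- the e-power product, reindexed via ω ↦ ω^e
  obtain ⟨k, -, hk⟩ := Nat.exists_mul_mod_eq_one_of_coprime hcopeℓ hℓ1
  have hcopkℓ : Nat.Coprime k ℓ := by
    have h4 : Nat.Coprime (e * k) ℓ := by
      have : Nat.gcd (e * k) ℓ = Nat.gcd ℓ (e * k) := Nat.gcd_comm _ _
      unfold Nat.Coprime
      rw [this, Nat.gcd_rec, hk, Nat.gcd_one_left]
    exact Nat.Coprime.coprime_dvd_left ⟨e, mul_comm e k⟩ h4
  have h3 : ∏ ω ∈ S, (1 - (ω * ξ) ^ e) = (Polynomial.cyclotomic ℓ ℂ).eval (ξ ^ e) := by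
    rw [← prod_one_sub_primRoots hℓ1 (ξ ^ e)]
    refine Finset.prod_nbij' (fun ω => ω ^ e) (fun ω => ω ^ k) ?_ ?_ ?_ ?_ ?_
    · intro ω hω
      exact (mem_primitiveRoots hℓpos).2 (((mem_primitiveRoots hℓpos).1 hω).pow_of_coprime e hcopeℓ)
    · intro ω hω
      exact (mem_primitiveRoots hℓpos).2 (((mem_primitiveRoots hℓpos).1 hω).pow_of_coprime k hcopkℓ)
    · intro ω hω
      have hωord : orderOf ω = ℓ := ((mem_primitiveRoots hℓpos).1 hω).eq_orderOf.symm
      show (ω ^ e) ^ k = ω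
      rw [← pow_mul, ← pow_mod_orderOf, hωord, hk, pow_one]
    · intro ω hω
      have hωord : orderOf ω = ℓ := ((mem_primitiveRoots hℓpos).1 hω).eq_orderOf.symm
      show (ω ^ k) ^ e = ω
      rw [← pow_mul, mul_comm k e, ← pow_mod_orderOf, hωord, hk, pow_one]
    · intro ω _
      rw [mul_pow, mul_comm (ω ^ e) (ξ ^ e)]
  rw [h1, h2, h3]
  -- evaluate the cyclotomic polynomial
  have hevalgen : ∀ y : ℂ, (1 - y) * (Polynomial.cyclotomic ℓ ℂ).eval y = 1 - y ^ ℓ := by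
    intro y
    rw [Polynomial.cyclotomic_prime ℂ ℓ]
    have h5 : (∑ i ∈ range ℓ, (X : ℂ[X]) ^ i).eval y = ∑ i ∈ range ℓ, y ^ i := by
      rw [eval_finset_sum]; simp
    rw [h5]
    have := geom_sum_mul y ℓ
    linear_combination -this
  -- nonvanishing
  have hne1 : (1 : ℂ) - ξ ≠ 0 := fun h => hξ1 (by linear_combination -h)
  have hneℓ : (1 : ℂ) - ξ ^ ℓ ≠ 0 := fun h => hξℓ (by linear_combination -h)
  have hnee : (1 : ℂ) - ξ ^ e ≠ 0 := fun h => hξe (by linear_combination -h)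
  have hBeq : (Polynomial.cyclotomic ℓ ℂ).eval ξ = (1 - ξ ^ ℓ) / (1 - ξ) := by
    rw [eq_div_iff hne1]
    linear_combination hevalgen ξ
  have hAeq : (Polynomial.cyclotomic ℓ ℂ).eval (ξ ^ e) = (1 - (ξ ^ e) ^ ℓ) / (1 - ξ ^ e) := by
    rw [eq_div_iff hnee]
    linear_combination hevalgen (ξ ^ e)
  -- the exponent identity
  have hzd : ξ ^ (d : ℤ) = 1 := by rw [zpow_natCast]; exact hξd
  have hexp : ξ ^ (((ℓ : ℤ) - 1) * c) = ξ ^ ((ℓ : ℤ) * cd) / ξ ^ cd := by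
    rw [← zpow_sub₀ hξ0]
    have hc' : c = (2 * (a : ℤ) * b + a + b + 1) * (1 - e) := by
      rw [hc]
      congr 1
      have : ((ℓ * d : ℕ) : ℤ) + 1 = 2 * (2 * a * b + a + b + 1) := by
        push_cast [hb, ha]; ring
      rw [this, Int.mul_ediv_cancel_left _ (by norm_num)]
    have hcd' : cd = ((a : ℤ) + 1) * (1 - e) := by
      rw [hcd]
      congr 1
      have : ((d : ℕ) : ℤ) + 1 = 2 * (a + 1) := by push_cast [ha]; ring
      rw [this, Int.mul_ediv_cancel_left _ (by norm_num)]
    have hm : ((ℓ : ℤ) - 1) * c = ((ℓ : ℤ) * cd - cd) + (d : ℤ) * ((1 - e) * 2 * b * b) := by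
      rw [hc', hcd']
      have hbz : (ℓ : ℤ) = 2 * b + 1 := by push_cast [hb]; ring
      have haz : (d : ℤ) = 2 * a + 1 := by push_cast [ha]; ring
      rw [hbz, haz]; ring
    rw [hm, zpow_add₀ hξ0, zpow_mul, hzd, one_zpow, mul_one]
  rw [hBeq, hAeq, hexp]
  -- unfold the right-hand side
  rw [cyc, cyc, hordℓ, hord]
  have hp1 : ((ξ : ℂ) ^ ℓ) ^ cd = ξ ^ ((ℓ : ℤ) * cd) := by
    rw [← zpow_natCast ξ ℓ, ← zpow_mul]
  have hp2 : ((ξ : ℂ) ^ ℓ) ^ e = (ξ ^ e) ^ ℓ := by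
    rw [← pow_mul, ← pow_mul, mul_comm]
  rw [hp1, hp2]
  have hz1 : ξ ^ ((ℓ : ℤ) * cd) ≠ 0 := zpow_ne_zero _ hξ0
  have hz2 : ξ ^ cd ≠ 0 := zpow_ne_zero _ hξ0
  field_simp
  first
  | (left; rw [hcd]; ring)
  | exact Or.inl trivial
  | ring
end

section
/- Let p be an odd prime and e > 1 an integer. Let η ∈ ℂ be a root of unity of odd order d such that p² divides d and gcd(e, d) = 1. Then ∏_{ζ ∈ μ_p} cyc(ζη) = cyc(η^p), where the product runs over all p-th roots of unity ζ ∈ ℂ (including ζ = 1). (This is the norm relation N_{F_{m+1}(n)/F_m(n)}(cyc(ρ_{m+1}ξ)) = cyc(ρ_m ξ^p) of Lemma 4.4(2), with the Galois conjugates of ρ_{m+1} written out.) -/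
set_option maxHeartbeats 1000000

/-- (Lemma 4.4(2), norm relation in the `p`-direction.)  For an odd prime
`p`, `e > 1`, and a root of unity `η` of odd order `d` with `p² ∣ d` and `gcd (e, d) = 1`,
one has `∏_{ζ^p = 1} cyc (ζ η) = cyc (η^p)`, the product running over all `p`-th roots of
unity `ζ ∈ ℂ` (including `ζ = 1`). -/
theorem statement1 (p : ℕ) (hp : p.Prime) (hpodd : Odd p) (e : ℕ) (he : 1 < e)
    (η : ℂ) (d : ℕ) (hdodd : Odd d) (hord : orderOf η = d) (hp2 : p ^ 2 ∣ d)
    (hcop : Nat.gcd e d = 1) :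
    ∏ ζ ∈ Polynomial.nthRootsFinset p (1 : ℂ), cyc e (ζ * η) = cyc e (η ^ p) := by
  classical
  set S := Polynomial.nthRootsFinset p (1 : ℂ) with hS
  have hp1 : 1 < p := hp.one_lt
  have hppos : 0 < p := hp.pos
  have hd0 : d ≠ 0 := by rintro rfl; rw [Nat.odd_iff] at hdodd; omega
  have hηd : η ^ d = 1 := by rw [← hord]; exact pow_orderOf_eq_one η
  have hη0 : η ≠ 0 := by
    intro h; rw [h, zero_pow hd0] at hηd; exact zero_ne_one hηd
  have hpd : p ∣ d := dvd_trans (dvd_pow_self p two_ne_zero) hp2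
  set m := d / p with hmdef
  have hm : d = p * m := (Nat.mul_div_cancel' hpd).symm
  have hpm : p ∣ m := by
    have h2 : p * p ∣ p * m := by rw [← hm, ← pow_two]; exact hp2
    exact (mul_dvd_mul_iff_left hp.pos.ne').mp h2
  have hmodd : Odd m := (Nat.odd_mul.mp (hm ▸ hdodd)).2
  have hm0 : m ≠ 0 := by rintro h; rw [h, Nat.odd_iff] at hmodd; omega
  have hmltd : m < d := by
    have h := Nat.pos_of_ne_zero hm0
    calc m = 1 * m := (one_mul m).symm
    _ < p * m := (Nat.mul_lt_mul_right h).mpr hp1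
    _ = d := hm.symm
  -- primitive p-th root
  obtain ⟨ξ, hξ⟩ : ∃ ξ : ℂ, IsPrimitiveRoot ξ p :=
    ⟨_, Complex.isPrimitiveRoot_exp p hp.pos.ne'⟩
  have hcard : S.card = p := hξ.card_nthRootsFinset
  have hprodlin : ∀ x : ℂ, ∏ ζ ∈ S, (x - ζ) = x ^ p - 1 := by
    intro x
    have h := congrArg (Polynomial.eval x) (Polynomial.X_pow_sub_one_eq_prod hp.pos hξ)
    simpa [Polynomial.eval_prod] using h.symm
  have hmem : ∀ ζ ∈ S, ζ ^ p = 1 := fun ζ hζ =>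
    (Polynomial.mem_nthRootsFinset hp.pos (1 : ℂ)).mp hζ
  have hprodroots : ∏ ζ ∈ S, ζ = 1 := by
    have h0 := hprodlin 0
    rw [zero_pow hp.pos.ne'] at h0
    have h1 : ∏ ζ ∈ S, (0 - ζ) = (-1) ^ S.card * ∏ ζ ∈ S, ζ := by
      rw [← Finset.prod_const, ← Finset.prod_mul_distrib]
      exact Finset.prod_congr rfl fun ζ _ => by ring
    rw [h1, hcard, hpodd.neg_one_pow] at h0
    linear_combination -h0
  have hlin : ∀ y : ℂ, y ≠ 0 → ∏ ζ ∈ S, (1 - ζ * y) = 1 - y ^ p := by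
    intro y hy
    have h1 : ∏ ζ ∈ S, (1 - ζ * y) = ∏ ζ ∈ S, (y * (y⁻¹ - ζ)) :=
      Finset.prod_congr rfl fun ζ _ => by field_simp
    rw [h1, Finset.prod_mul_distrib, Finset.prod_const, hcard, hprodlin, inv_pow,
      mul_sub, mul_inv_cancel₀ (pow_ne_zero p hy), mul_one]
  -- orderOf (ζ * η) = d for ζ ∈ S
  have horder : ∀ ζ ∈ S, orderOf (ζ * η) = d := by
    intro ζ hζ
    have hζp : ζ ^ p = 1 := hmem ζ hζ
    have hζd : ζ ^ d = 1 := by rw [hm, pow_mul, hζp, one_pow]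
    have h1 : (ζ * η) ^ d = 1 := by rw [mul_pow, hζd, hηd, one_mul]
    set t := orderOf (ζ * η) with ht
    have htd : t ∣ d := orderOf_dvd_of_pow_eq_one h1
    have hpη : (ζ * η) ^ p = η ^ p := by rw [mul_pow, hζp, one_mul]
    have h2 : η ^ (p * t) = 1 := by
      calc η ^ (p * t) = ((ζ * η) ^ p) ^ t := by rw [hpη, ← pow_mul]
        _ = ((ζ * η) ^ t) ^ p := by rw [← pow_mul, mul_comm p t, pow_mul]
        _ = 1 := by rw [ht, pow_orderOf_eq_one, one_pow]
    have hdpt : d ∣ p * t := hord ▸ orderOf_dvd_of_pow_eq_one h2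
    have hmt : m ∣ t := by
      have h3 : p * m ∣ p * t := hm ▸ hdpt
      exact (mul_dvd_mul_iff_left hp.pos.ne').mp h3
    obtain ⟨s, hs⟩ := hmt
    have hsp : s ∣ p := by
      have h4 : m * s ∣ m * p := by rw [← hs, mul_comm m p, ← hm]; exact htd
      exact (mul_dvd_mul_iff_left (Nat.pos_of_ne_zero hm0).ne').mp h4
    rcases (Nat.Prime.eq_one_or_self_of_dvd hp s hsp) with h | h
    · exfalso
      have htm : t = m := by rw [hs, h, mul_one]
      have h5 : (ζ * η) ^ m = 1 := by rw [← htm, ht]; exact pow_orderOf_eq_one _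
      obtain ⟨u, hu⟩ := hpm
      have hζm : ζ ^ m = 1 := by rw [hu, pow_mul, hζp, one_pow]
      have hηm : η ^ m = 1 := by rw [mul_pow, hζm, one_mul] at h5; exact h5
      have : d ∣ m := hord ▸ orderOf_dvd_of_pow_eq_one hηm
      exact absurd (Nat.le_of_dvd (Nat.pos_of_ne_zero hm0) this) (by omega)
    · rw [hs, h, Nat.mul_comm m p, ← hm]
  -- order of η^p
  have hordp : orderOf (η ^ p) = m := by
    rw [orderOf_pow' η hp.pos.ne', hord, Nat.gcd_eq_right hpd, hmdef]
  -- the e-th power bijection on S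
  have hep : Nat.Coprime e p := Nat.Coprime.coprime_dvd_right hpd hcop
  obtain ⟨e', -, hee'⟩ := Nat.exists_mul_mod_eq_one_of_coprime hep hp1
  have hbij : ∀ y : ℂ, ∏ ζ ∈ S, (1 - ζ ^ e * y) = ∏ ζ ∈ S, (1 - ζ * y) := by
    intro y
    refine Finset.prod_nbij' (fun ζ => ζ ^ e) (fun ζ => ζ ^ e') ?_ ?_ ?_ ?_ ?_
    · intro ζ hζ
      rw [hS, Polynomial.mem_nthRootsFinset hp.pos, ← pow_mul, mul_comm, pow_mul,
        hmem ζ hζ, one_pow]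
    · intro ζ hζ
      rw [hS, Polynomial.mem_nthRootsFinset hp.pos, ← pow_mul, mul_comm, pow_mul,
        hmem ζ hζ, one_pow]
    · intro ζ hζ
      show (ζ ^ e) ^ e' = ζ
      have hk : e * e' = p * (e * e' / p) + 1 := by
        conv_lhs => rw [← Nat.div_add_mod (e * e') p]
        rw [hee']
      rw [← pow_mul, hk, pow_succ, pow_mul, hmem ζ hζ, one_pow, one_mul]
    · intro ζ hζ
      show (ζ ^ e') ^ e = ζ
      have hee2 : e' * e % p = 1 := by rw [mul_comm]; exact hee'
      have hk : e' * e = p * (e' * e / p) + 1 := by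
        conv_lhs => rw [← Nat.div_add_mod (e' * e) p]
        rw [hee2]
      rw [← pow_mul, hk, pow_succ, pow_mul, hmem ζ hζ, one_pow, one_mul]
    · intro ζ hζ; rfl
  -- exponent bookkeeping
  obtain ⟨a, ha⟩ := hdodd
  obtain ⟨b, hb⟩ := hmodd
  obtain ⟨c, hc⟩ := hpodd
  have e1 : (d : ℤ) = (p : ℤ) * m := by exact_mod_cast hm
  have e2 : (d : ℤ) = 2 * a + 1 := by exact_mod_cast ha
  have e3 : (m : ℤ) = 2 * b + 1 := by exact_mod_cast hb
  have e4 : (p : ℤ) = 2 * c + 1 := by exact_mod_cast hc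
  have hd2 : ((d : ℤ) + 1) / 2 = (a : ℤ) + 1 := by omega
  have hm2 : ((m : ℤ) + 1) / 2 = (b : ℤ) + 1 := by omega
  have h2T : (2 : ℤ) * ((p : ℤ) * a - (p : ℤ) * b - (d : ℤ) * c) = 0 := by
    linear_combination (-(p : ℤ)) * e2 + (p : ℤ) * e3 + (d : ℤ) * e4 + e1
  have hT : (p : ℤ) * a - (p : ℤ) * b - (d : ℤ) * c = 0 := by linarith
  set A : ℤ := (((d : ℤ) + 1) / 2) * (1 - (e : ℤ)) with hA
  set B : ℤ := (((m : ℤ) + 1) / 2) * (1 - (e : ℤ)) with hB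
  have hexp : (p : ℤ) * A = (p : ℤ) * B + (d : ℤ) * ((c : ℤ) * (1 - (e : ℤ))) := by
    rw [hA, hB, hd2, hm2]; linear_combination (1 - (e : ℤ)) * hT
  have hzd : η ^ ((d : ℤ) * ((c : ℤ) * (1 - (e : ℤ)))) = 1 := by
    rw [zpow_mul, zpow_natCast, hηd, one_zpow]
  have hkey : η ^ ((p : ℤ) * A) = η ^ ((p : ℤ) * B) := by
    rw [hexp, zpow_add₀ hη0, hzd, mul_one]
  -- main computation
  have hLHS : ∏ ζ ∈ S, cyc e (ζ * η)
      = (η ^ p) ^ A * (1 - (η ^ p) ^ e) / (1 - η ^ p) := by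
    have hstep : ∏ ζ ∈ S, cyc e (ζ * η)
        = ∏ ζ ∈ S, ((ζ * η) ^ A * (1 - (ζ * η) ^ e) / (1 - ζ * η)) := by
      refine Finset.prod_congr rfl fun ζ hζ => ?_
      simp only [cyc]
      rw [horder ζ hζ, hA]
    rw [hstep, Finset.prod_div_distrib, Finset.prod_mul_distrib, Finset.prod_zpow]
    have hmprod : ∏ ζ ∈ S, (ζ * η) = η ^ p := by
      rw [Finset.prod_mul_distrib, hprodroots, one_mul, Finset.prod_const, hcard]
    have hnum2 : ∏ ζ ∈ S, (1 - (ζ * η) ^ e) = 1 - (η ^ p) ^ e := by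
      have : ∀ ζ : ℂ, (ζ * η) ^ e = ζ ^ e * η ^ e := fun ζ => mul_pow ζ η e
      simp_rw [this]
      rw [hbij (η ^ e), hlin (η ^ e) (pow_ne_zero e hη0), ← pow_mul, mul_comm e p,
        pow_mul]
    have hden : ∏ ζ ∈ S, (1 - ζ * η) = 1 - η ^ p := hlin η hη0
    rw [hmprod, hnum2, hden]
  have hfin : (η ^ p) ^ A = (η ^ p) ^ B := by
    rw [← zpow_natCast η p, ← zpow_mul, ← zpow_mul]
    exact hkey
  rw [hLHS]
  simp only [cyc]
  rw [hordp, ← hB, hfin]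
end

section
/- Let p be an odd prime, N ≥ 1 an integer, and L/K a finite Galois extension of fields of characteristic zero such that L contains no primitive p-th root of unity. Then the natural map K^×/(K^×)^{p^N} → (L^×/(L^×)^{p^N})^{Gal(L/K)} induced by the inclusion K ⊆ L is bijective. -/
/-- The quotient of a commutative group `G` by the subgroup of `n`-th powers. -/
abbrev powQuot (G : Type*) [CommGroup G] (n : ℕ) : Type _ :=
  G ⧸ (powMonoidHom n : G →* G).range

/-- The map `G/(Gⁿ) → H/(Hⁿ)` induced by a group homomorphism `f : G →* H`. -/
def powQuotMap {G H : Type*} [CommGroup G] [CommGroup H] (n : ℕ) (f : G →* H) :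
    powQuot G n →* powQuot H n :=
  QuotientGroup.map _ _ f (by
    rintro x ⟨y, rfl⟩
    exact ⟨f y, by simp [powMonoidHom, map_pow]⟩)

lemma fixed_mem_range' {K L : Type*} [Field K] [Field L] [Algebra K L]
    [FiniteDimensional K L] [IsGalois K L] (x : L)
    (hx : ∀ σ : L ≃ₐ[K] L, σ x = x) : ∃ k : K, algebraMap K L k = x := by
  have h2 : x ∈ IntermediateField.fixedField (⊤ : Subgroup (L ≃ₐ[K] L)) := fun g => hx g
  rw [← IntermediateField.fixingSubgroup_bot (F := K) (E := L), IsGalois.fixedField_fixingSubgroup] at h2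
  exact IntermediateField.mem_bot.mp h2

lemma unit_pow_eq_one' {L : Type*} [Field L] {p : ℕ} (hp : p.Prime)
    (hnoroot : ∀ ζ : L, ¬ IsPrimitiveRoot ζ p) {N : ℕ} (ζ : Lˣ)
    (h : ζ ^ p ^ N = 1) : ζ = 1 := by
  have hd : orderOf ζ ∣ p ^ N := orderOf_dvd_of_pow_eq_one h
  obtain ⟨k, hk, hord⟩ := (Nat.dvd_prime_pow hp).mp hd
  rcases Nat.eq_zero_or_pos k with rfl | hkpos
  · rw [pow_zero] at hord
    exact orderOf_eq_one_iff.mp hord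
  · exfalso
    set η : Lˣ := ζ ^ p ^ (k - 1) with hη
    have hηp : η ^ p = 1 := by
      rw [hη, ← pow_mul, ← pow_succ, Nat.sub_add_cancel hkpos, ← hord]
      exact pow_orderOf_eq_one ζ
    have hη1 : η ≠ 1 := by
      intro h1
      have : orderOf ζ ∣ p ^ (k - 1) := orderOf_dvd_of_pow_eq_one h1
      rw [hord] at this
      exact absurd (Nat.pow_dvd_pow_iff_le_right hp.one_lt |>.mp this) (by omega)
    have : Fact p.Prime := ⟨hp⟩
    have hop : orderOf η = p := orderOf_eq_prime hηp hη1
    refine hnoroot (η : L)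
      ⟨by rw [← Units.val_pow_eq_pow_val, hηp, Units.val_one], fun l hl => ?_⟩
    have : η ^ l = 1 := by ext; rw [Units.val_pow_eq_pow_val, hl, Units.val_one]
    rw [← hop]
    exact orderOf_dvd_of_pow_eq_one this

lemma pow_root_unique' {L : Type*} [Field L] {p : ℕ} (hp : p.Prime)
    (hnoroot : ∀ ζ : L, ¬ IsPrimitiveRoot ζ p) {N : ℕ} {c d : Lˣ}
    (h : c ^ p ^ N = d ^ p ^ N) : c = d := by
  have : (c / d) ^ p ^ N = 1 := by rw [div_pow, h, div_self']
  have := unit_pow_eq_one' hp hnoroot _ this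
  exact div_eq_one.mp this

/-- Let `p` be an odd prime, `N ≥ 1`, and `L/K` a finite Galois extension
of characteristic-zero fields such that `L` contains no primitive `p`-th root of unity.
Then `K^×/(K^×)^{p^N} → (L^×/(L^×)^{p^N})^{Gal(L/K)}` is bijective: the induced map on
power quotients is injective, and its range is exactly the set of `Gal(L/K)`-fixed points. -/
theorem statement2 (p N : ℕ) (hp : p.Prime) (hpodd : Odd p) (hN : 1 ≤ N)
    (K L : Type*) [Field K] [Field L] [CharZero K] [CharZero L] [Algebra K L]
    [FiniteDimensional K L] [IsGalois K L]
    (hnoroot : ∀ ζ : L, ¬ IsPrimitiveRoot ζ p) :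
    Function.Injective
      (powQuotMap (p ^ N) (Units.map (algebraMap K L).toMonoidHom)) ∧
    Set.range (powQuotMap (p ^ N) (Units.map (algebraMap K L).toMonoidHom)) =
      {y : powQuot Lˣ (p ^ N) | ∀ σ : L ≃ₐ[K] L,
        powQuotMap (p ^ N) (Units.map σ.toRingEquiv.toRingHom.toMonoidHom) y = y} := by
  set n := p ^ N with hn
  set i : Kˣ →* Lˣ := Units.map (algebraMap K L).toMonoidHom with hi
  have hival : ∀ u : Kˣ, ((i u : Lˣ) : L) = algebraMap K L u := fun u => rfl
  have hSval : ∀ (σ : L ≃ₐ[K] L) (u : Lˣ),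
      ((Units.map σ.toRingEquiv.toRingHom.toMonoidHom u : Lˣ) : L) = σ u := fun σ u => rfl
  constructor
  · -- injectivity
    rw [injective_iff_map_eq_one]
    intro a
    induction a using QuotientGroup.induction_on with
    | H u =>
      intro ha
      rw [show (powQuotMap n i (QuotientGroup.mk u)) = QuotientGroup.mk (i u) from rfl,
        QuotientGroup.eq_one_iff] at ha
      obtain ⟨b, hb⟩ := ha
      have hb' : b ^ n = i u := hb
      -- b is fixed by every σ
      have hfix : ∀ σ : L ≃ₐ[K] L, σ (b : L) = (b : L) := by
        intro σ
        have h1 : (Units.map σ.toRingEquiv.toRingHom.toMonoidHom b) ^ n = b ^ n := by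
          rw [← map_pow, hb']
          ext
          rw [hSval, hival, AlgEquiv.commutes]
        have := pow_root_unique' hp hnoroot h1
        have := congrArg Units.val this
        rwa [hSval] at this
      obtain ⟨k, hk⟩ := fixed_mem_range' (b : L) hfix
      have hk0 : k ≠ 0 := by
        intro h0
        rw [h0, map_zero] at hk
        exact b.ne_zero hk.symm
      rw [QuotientGroup.eq_one_iff]
      refine ⟨Units.mk0 k hk0, ?_⟩
      ext
      have : algebraMap K L (k ^ n) = algebraMap K L (u : K) := by
        rw [map_pow, hk]
        have := congrArg Units.val hb'
        rw [hival] at this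
        exact this
      have := (algebraMap K L).injective this
      simpa using this
  · -- range = fixed points
    ext y
    constructor
    · rintro ⟨x, rfl⟩
      induction x using QuotientGroup.induction_on with
      | H u =>
        intro σ
        show QuotientGroup.mk (Units.map σ.toRingEquiv.toRingHom.toMonoidHom (i u))
            = QuotientGroup.mk (i u)
        congr 1
        ext
        rw [hSval, hival, AlgEquiv.commutes]
    · intro hy
      induction y using QuotientGroup.induction_on with
      | H b =>
        have hy' : ∀ σ : L ≃ₐ[K] L, ∃ c : Lˣ,
            c ^ n = Units.map σ.toRingEquiv.toRingHom.toMonoidHom b * b⁻¹ := by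
          intro σ
          have := hy σ
          rw [show (powQuotMap n (Units.map σ.toRingEquiv.toRingHom.toMonoidHom)
              (QuotientGroup.mk b)) =
              QuotientGroup.mk (Units.map σ.toRingEquiv.toRingHom.toMonoidHom b) from rfl,
            QuotientGroup.eq] at this
          obtain ⟨c, hc⟩ := this
          refine ⟨c⁻¹, ?_⟩
          have hc' : c ^ n = (Units.map σ.toRingEquiv.toRingHom.toMonoidHom b)⁻¹ * b := hc
          rw [inv_pow, hc', mul_inv_rev, inv_inv, mul_comm]
        choose c hc using hy'
        -- c is a 1-cocycle
        have hmap : ∀ (σ : L ≃ₐ[K] L) (u : Lˣ),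
            Units.map σ.toRingEquiv.toRingHom.toMonoidHom u = σ • u := by
          intro σ u
          rw [AlgEquiv.smul_units_def]
          rfl
        have hcomp : ∀ (g h : L ≃ₐ[K] L),
            Units.map (g * h).toRingEquiv.toRingHom.toMonoidHom b
              = Units.map g.toRingEquiv.toRingHom.toMonoidHom
                  (Units.map h.toRingEquiv.toRingHom.toMonoidHom b) := by
          intro g h
          ext
          rfl
        have hcoc : groupCohomology.IsMulCocycle₁ c := by
          intro g h
          apply pow_root_unique' hp hnoroot (N := N)
          rw [← hn, hc, mul_pow, ← hmap, ← map_pow, hc, hc, map_mul, map_inv, ← hcomp]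
          group
        obtain ⟨β, hβ⟩ := groupCohomology.isMulCoboundary₁_of_isMulCocycle₁_of_aut_to_units c hcoc
        -- u := b * (β^n)⁻¹ is fixed
        set u : Lˣ := b * (β ^ n)⁻¹ with hu
        have hufix : ∀ σ : L ≃ₐ[K] L, σ (u : L) = (u : L) := by
          intro σ
          have h1 : Units.map σ.toRingEquiv.toRingHom.toMonoidHom u = u := by
            have hβσ : σ • β = c σ * β := by
              have := hβ σ
              rw [div_eq_iff_eq_mul] at this
              rw [this]
            have hbσ : Units.map σ.toRingEquiv.toRingHom.toMonoidHom b = c σ ^ n * b := by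
              rw [hc]; group
            rw [hu, map_mul, hbσ, map_inv, map_pow, hmap, hβσ, mul_pow, mul_inv,
              mul_comm (c σ ^ n) b, mul_assoc, mul_inv_cancel_left]
          have := congrArg Units.val h1
          rwa [hSval] at this
        obtain ⟨k, hk⟩ := fixed_mem_range' (u : L) hufix
        have hk0 : k ≠ 0 := by
          intro h0
          rw [h0, map_zero] at hk
          exact u.ne_zero hk.symm
        refine ⟨QuotientGroup.mk (Units.mk0 k hk0), ?_⟩
        rw [show (powQuotMap n i (QuotientGroup.mk (Units.mk0 k hk0))) =
          QuotientGroup.mk (i (Units.mk0 k hk0)) from rfl]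
        have hiu : i (Units.mk0 k hk0) = u := by
          ext; rw [hival]; exact hk
        rw [hiu, QuotientGroup.eq]
        refine ⟨β, ?_⟩
        show β ^ n = u⁻¹ * b
        rw [hu, mul_inv_rev, inv_inv, mul_assoc, inv_mul_cancel, mul_one]
end

section
/- Let p be a prime, N ≥ 1, and G a finite abelian group. Then the group ring R := (ℤ/p^Nℤ)[G] is an injective module over itself; that is, every R-module homomorphism from a submodule of an R-module M into R extends to an R-module homomorphism M → R. -/
/-- Transfer `Module.Injective` along a linear equivalence. -/
theorem aux_injective_of_equiv {R : Type*} [Ring R] {Q Q' : Type v}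
    [AddCommGroup Q] [AddCommGroup Q'] [Module R Q] [Module R Q']
    (e : Q ≃ₗ[R] Q') (h : Module.Injective R Q) : Module.Injective R Q' where
  out X Y _ _ _ _ f hf g := by
    obtain ⟨h', hh'⟩ := h.out f hf (e.symm.toLinearMap ∘ₗ g)
    exact ⟨e.toLinearMap ∘ₗ h', fun x => by
      simp only [LinearMap.comp_apply, hh', LinearEquiv.coe_coe, LinearEquiv.apply_symm_apply]⟩

variable {n : ℕ} [NeZero n]

/-- The character `ZMod n →+ ℚ/ℤ` sending `j` to `j / n`. -/
noncomputable def auxChi : ZMod n →+ AddCircle (1 : ℚ) :=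
  ZMod.lift n ⟨(QuotientAddGroup.mk' _).comp
      ((LinearMap.toSpanSingleton ℤ ℚ ((n : ℚ)⁻¹)).toAddMonoidHom),
    by
      have hn : (n : ℚ) ≠ 0 := Nat.cast_ne_zero.mpr (NeZero.ne n)
      simp only [AddMonoidHom.comp_apply, LinearMap.toAddMonoidHom_coe,
        LinearMap.toSpanSingleton_apply, QuotientAddGroup.mk'_apply]
      rw [show (n : ℤ) • ((n : ℚ)⁻¹) = ((n : ℚ) * (n : ℚ)⁻¹) by
          rw [zsmul_eq_mul]; push_cast; ring,
        mul_inv_cancel₀ hn]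
      exact (QuotientAddGroup.eq_zero_iff _).mpr (AddSubgroup.mem_zmultiples 1)⟩

lemma auxChi_intCast (j : ℤ) : auxChi (j : ZMod n) = ((j / n : ℚ) : AddCircle (1 : ℚ)) := by
  rw [auxChi, ZMod.lift_coe]
  simp only [AddMonoidHom.comp_apply, LinearMap.toAddMonoidHom_coe,
    LinearMap.toSpanSingleton_apply, QuotientAddGroup.mk'_apply]
  norm_num [div_eq_mul_inv]

lemma auxChi_injective : Function.Injective (auxChi : ZMod n → AddCircle (1 : ℚ)) := by
  have hn : (n : ℚ) ≠ 0 := Nat.cast_ne_zero.mpr (NeZero.ne n)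
  intro a b hab
  obtain ⟨j, rfl⟩ := ZMod.intCast_surjective a
  obtain ⟨k, rfl⟩ := ZMod.intCast_surjective b
  rw [auxChi_intCast, auxChi_intCast] at hab
  rw [← sub_eq_zero, ← Int.cast_sub, ZMod.intCast_zmod_eq_zero_iff_dvd]
  have h0 : (((j / n - k / n : ℚ)) : AddCircle (1 : ℚ)) = 0 := by
    rw [QuotientAddGroup.mk_sub, sub_eq_zero]; exact hab
  rw [QuotientAddGroup.eq_zero_iff] at h0
  obtain ⟨m, hm⟩ := h0
  have hq : (j : ℚ) - k = m * n := by
    simp only [zsmul_eq_mul, mul_one] at hm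
    field_simp at hm
    linarith [hm]
  have hz : (j - k : ℤ) = m * n := by exact_mod_cast hq
  exact ⟨m, by linarith [hz]⟩

/-- `n`-torsion elements of `ℚ/ℤ` are in the image of `auxChi`. -/
lemma auxChi_surjective_on_torsion (u : AddCircle (1 : ℚ)) (hu : n • u = 0) :
    ∃ a : ZMod n, auxChi a = u := by
  have hn : (n : ℚ) ≠ 0 := Nat.cast_ne_zero.mpr (NeZero.ne n)
  obtain ⟨q, rfl⟩ := QuotientAddGroup.mk_surjective u
  rw [← QuotientAddGroup.mk_nsmul, QuotientAddGroup.eq_zero_iff] at hu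
  obtain ⟨m, hm⟩ := hu
  refine ⟨(m : ZMod n), ?_⟩
  rw [auxChi_intCast]
  congr 1
  have : (n : ℚ) * q = m := by
    simpa [nsmul_eq_mul, zsmul_eq_mul] using hm.symm
  field_simp
  linarith [this]

/-- For a prime `p`, `N ≥ 1` and a finite abelian group `G`, the group ring
`R = (ℤ/p^Nℤ)[G]` is self-injective: every `R`-module homomorphism from a submodule of an
`R`-module into `R` extends to the whole module. -/
theorem statement8 (p N : ℕ) (hp : p.Prime) (hN : 1 ≤ N)
    (G : Type*) [CommGroup G] [Finite G] :
    Module.Injective (MonoidAlgebra (ZMod (p ^ N)) G) (MonoidAlgebra (ZMod (p ^ N)) G) := by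
  haveI : NeZero (p ^ N) := ⟨pow_ne_zero _ hp.pos.ne'⟩
  set n := p ^ N with hn
  set R := MonoidAlgebra (ZMod n) G with hR
  have hinj : Module.Injective R (CharacterModule R) :=
    Module.Flat.iff_characterModule_injective.mp inferInstance
  let χ : CharacterModule R := auxChi.comp ((Finsupp.applyAddHom (1 : G)).comp
    (MonoidAlgebra.coeffAddEquiv : R ≃+ (G →₀ ZMod n)).toAddMonoidHom)
  have hχ : ∀ y : R, χ y = auxChi (y.coeff 1) := fun y => rfl
  let e : R →ₗ[R] CharacterModule R := LinearMap.toSpanSingleton R _ χ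
  have he : ∀ r y : R, e r y = auxChi ((r * y).coeff 1) := fun r y => rfl
  have hei : Function.Injective e := by
    rw [← LinearMap.ker_eq_bot, LinearMap.ker_eq_bot']
    intro r hr
    refine MonoidAlgebra.coeff_injective (Finsupp.ext fun g => ?_)
    apply auxChi_injective
    have h1 : e r (MonoidAlgebra.single g⁻¹ 1) = 0 := by rw [hr]; rfl
    rw [he] at h1
    rw [MonoidAlgebra.coeff_mul_single_apply, one_mul, inv_inv, mul_one] at h1
    rw [h1]; simp
  have hes : Function.Surjective e := by
    intro ψ
    have hdg : ∀ g : G, ∃ a : ZMod n, auxChi a = ψ (MonoidAlgebra.single g⁻¹ 1) := by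
      intro g
      apply auxChi_surjective_on_torsion
      have h0 : n • (MonoidAlgebra.single g⁻¹ (1 : ZMod n)) = 0 := by
        rw [show n • (MonoidAlgebra.single g⁻¹ (1 : ZMod n))
            = MonoidAlgebra.single g⁻¹ (n • (1 : ZMod n)) from MonoidAlgebra.smul_single n g⁻¹ 1]
        simp [nsmul_eq_mul]
      calc n • ψ (MonoidAlgebra.single g⁻¹ 1)
          = ψ (n • MonoidAlgebra.single g⁻¹ 1) := (map_nsmul ψ _ _).symm
        _ = 0 := by rw [h0, map_zero]
    choose d hd using hdg
    haveI := Fintype.ofFinite G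
    refine ⟨MonoidAlgebra.ofCoeff (Finsupp.equivFunOnFinite.symm d), ?_⟩
    refine DFunLike.ext _ _ fun x => ?_
    induction x using MonoidAlgebra.induction with
    | zero => rw [map_zero, map_zero]
    | single_add g a f hgf ha ih =>
      rw [map_add, map_add, ih]
      congr 1
      have hc : (MonoidAlgebra.ofCoeff (Finsupp.equivFunOnFinite.symm d) : R).coeff g⁻¹ = d g⁻¹ := rfl
      rw [he, MonoidAlgebra.coeff_mul_single_apply, one_mul, hc]
      have hval : ((a.val : ℕ) : ZMod n) = a := ZMod.natCast_zmod_val a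
      have h2 : d g⁻¹ * a = a.val • d g⁻¹ := by
        rw [nsmul_eq_mul, hval, mul_comm]
      rw [h2, map_nsmul, hd, inv_inv, ← map_nsmul]
      congr 1
      rw [show a.val • (MonoidAlgebra.single g (1 : ZMod n))
          = MonoidAlgebra.single g (a.val • (1 : ZMod n)) from MonoidAlgebra.smul_single _ g 1]
      rw [nsmul_eq_mul, mul_one, hval]
  exact aux_injective_of_equiv (LinearEquiv.ofBijective e ⟨hei, hes⟩).symm hinj
end
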